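/- Let f : ℝ → ℝ be f(x) = |x|. Then for every λ > 0, the upper compensated convex transform satisfies C^u_λ(f)(x) = λx² + 1/(4λ) for |x| ≤ 1/(2λ) and C^u_λ(f)(x) = |x| for |x| ≥ 1/(2λ). -/

import Mathlib

open Filter Metric Set
open scoped Topology RealInnerProductSpace

/-- The convex envelope of `g`: pointwise supremum of convex functions below `g`. -/
noncomputable def convEnv {E : Type*} [NormedAddCommGroup E] [NormedSpace ℝ E]
    (g : E → ℝ) (x : E) : ℝ :=
  sSup {y : ℝ | ∃ h : E → ℝ, ConvexOn ℝ Set.univ h ∧ (∀ z, h z ≤ g z) ∧ y = h x}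

/-- Upper compensated convex transform. -/
noncomputable def upperT {E : Type*} [NormedAddCommGroup E] [NormedSpace ℝ E]
    (lam : ℝ) (g : E → ℝ) (x : E) : ℝ :=
  lam * ‖x‖ ^ 2 - convEnv (fun y => lam * ‖y‖ ^ 2 - g y) x

/-- Lower compensated convex transform. -/
noncomputable def lowerT {E : Type*} [NormedAddCommGroup E] [NormedSpace ℝ E]
    (lam : ℝ) (g : E → ℝ) (x : E) : ℝ :=
  convEnv (fun y => g y + lam * ‖y‖ ^ 2) x - lam * ‖x‖ ^ 2

theorem stmt_0 (lam : ℝ) (hlam : 0 < lam) (x : ℝ) :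
    (|x| ≤ 1 / (2 * lam) → upperT lam (fun y => |y|) x = lam * x ^ 2 + 1 / (4 * lam)) ∧
    (|x| ≥ 1 / (2 * lam) → upperT lam (fun y => |y|) x = |x|) := by
  have h2 : (0:ℝ) < 2 * lam := by linarith
  set c : ℝ := 1 / (2 * lam) with hc
  have hcpos : 0 < c := by positivity
  have hcl : 2 * lam * c = 1 := by rw [hc]; field_simp
  set g : ℝ → ℝ := fun y => lam * ‖y‖ ^ 2 - |y| with hg
  have hgabs : ∀ y : ℝ, g y = lam * y ^ 2 - |y| := by
    intro y; simp [hg, Real.norm_eq_abs, sq_abs]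
  have hbdd : BddAbove {y : ℝ | ∃ h : ℝ → ℝ, ConvexOn ℝ Set.univ h ∧ (∀ z, h z ≤ g z) ∧ y = h x} := by
    refine ⟨g x, ?_⟩
    rintro y ⟨h, hconv, hle, rfl⟩
    exact hle x
  -- the constant function -(1/(4*lam)) is below g
  have hconstle : ∀ y : ℝ, -(1 / (4 * lam)) ≤ g y := by
    intro y
    rw [hgabs]
    have h4 : (0:ℝ) < 4 * lam := by linarith
    rw [neg_le, le_div_iff₀ h4]
    rcases abs_cases y with ⟨hy, _⟩ | ⟨hy, _⟩ <;> rw [hy] <;>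
      nlinarith [sq_nonneg (2 * lam * y - 1), sq_nonneg (2 * lam * y + 1)]
  have hgc : g c = -(1 / (4 * lam)) := by
    rw [hgabs, abs_of_pos hcpos, hc]
    field_simp
    ring
  have hgc' : g (-c) = -(1 / (4 * lam)) := by
    rw [hgabs, abs_of_neg (by linarith : -c < 0)]
    rw [hgabs, abs_of_pos hcpos] at hgc
    nlinarith [hgc]
  constructor
  · -- |x| ≤ c
    intro hx
    have henv : convEnv g x = -(1 / (4 * lam)) := by
      apply le_antisymm
      · apply csSup_le
        · exact ⟨-(1 / (4 * lam)), fun _ => -(1 / (4 * lam)),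
            convexOn_const _ convex_univ, hconstle, rfl⟩
        rintro y ⟨h, hconv, hle, rfl⟩
        -- x is a convex combination of -c and c
        have habs := abs_le.mp hx
        set t : ℝ := (c - x) / (2 * c) with ht
        have ht0 : 0 ≤ t := by
          apply div_nonneg <;> linarith [habs.1, habs.2]
        have ht1 : 0 ≤ 1 - t := by
          rw [ht]
          rw [sub_nonneg, div_le_one (by linarith : (0:ℝ) < 2 * c)]
          linarith [habs.1]
        have hx' : t * (-c) + (1 - t) * c = x := by
          have := div_mul_cancel₀ (c - x) (by positivity : (2 * c) ≠ 0)
          rw [← ht] at this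
          linear_combination -this
        have := hconv.2 (Set.mem_univ (-c)) (Set.mem_univ c) ht0 ht1 (by linarith)
        simp only [smul_eq_mul] at this
        rw [hx'] at this
        calc h x ≤ t * h (-c) + (1 - t) * h c := this
          _ ≤ t * (-(1 / (4 * lam))) + (1 - t) * (-(1 / (4 * lam))) := by
              have h1 := (hle (-c)).trans_eq hgc'
              have h2 := (hle c).trans_eq hgc
              nlinarith
          _ = -(1 / (4 * lam)) := by ring
      · apply le_csSup hbdd
        exact ⟨fun _ => -(1 / (4 * lam)), convexOn_const _ convex_univ, hconstle, rfl⟩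
    show lam * ‖x‖ ^ 2 - convEnv g x = lam * x ^ 2 + 1 / (4 * lam)
    rw [henv, Real.norm_eq_abs, sq_abs]
    ring
  · -- |x| ≥ c
    intro hx
    have hx2 : 1 ≤ 2 * lam * |x| := by
      rw [ge_iff_le, hc, div_le_iff₀ h2] at hx
      linarith
    -- tangent affine function
    set s : ℝ := if 0 ≤ x then 1 else -1 with hs
    have hsx : s * x = |x| := by
      rcases le_or_gt 0 x with h | h
      · simp [hs, h, abs_of_nonneg h]
      · simp [hs, not_le.mpr h, abs_of_neg h]
    set m : ℝ := 2 * lam * x - s with hm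
    set h : ℝ → ℝ := fun y => m * y - lam * x ^ 2 with hhdef
    have hconv : ConvexOn ℝ Set.univ h := by
      refine ⟨convex_univ, ?_⟩
      intro a _ b _ p q hp hq hpq
      simp only [hhdef, smul_eq_mul]
      have heq : m * (p * a + q * b) - lam * x ^ 2 =
          p * (m * a - lam * x ^ 2) + q * (m * b - lam * x ^ 2) := by
        linear_combination lam * x ^ 2 * hpq
      exact le_of_eq heq
    have hhx : h x = g x := by
      rw [hgabs, hhdef]
      simp only [hm]
      rw [← hsx]; ring
    have hle : ∀ z, h z ≤ g z := by
      intro z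
      rw [hgabs, hhdef]
      simp only [hm]
      rcases le_or_gt 0 x with hxs | hxs
      · have hs1 : s = 1 := by simp [hs, hxs]
        have hxabs : |x| = x := abs_of_nonneg hxs
        rcases le_or_gt 0 z with hzs | hzs
        · rw [abs_of_nonneg hzs, hs1]
          nlinarith [sq_nonneg (z - x)]
        · rw [abs_of_neg hzs, hs1]
          rw [hxabs] at hx2
          nlinarith [sq_nonneg (lam * (z - x) + 1), sq_nonneg (z - x)]
      · have hs1 : s = -1 := by simp [hs, not_le.mpr hxs]
        have hxabs : |x| = -x := abs_of_neg hxs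
        rcases le_or_gt 0 z with hzs | hzs
        · rw [abs_of_nonneg hzs, hs1]
          rw [hxabs] at hx2
          nlinarith [sq_nonneg (lam * (z - x) - 1), sq_nonneg (z - x)]
        · rw [abs_of_neg hzs, hs1]
          nlinarith [sq_nonneg (z - x)]
    have henv : convEnv g x = g x := by
      apply le_antisymm
      · apply csSup_le
        · exact ⟨-(1 / (4 * lam)), fun _ => -(1 / (4 * lam)),
            convexOn_const _ convex_univ, hconstle, rfl⟩
        rintro y ⟨h', hconv', hle', rfl⟩
        exact hle' x
      · exact hhx ▸ le_csSup hbdd ⟨h, hconv, hle, rfl⟩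
    show lam * ‖x‖ ^ 2 - convEnv g x = |x|
    rw [henv, hgabs, Real.norm_eq_abs, sq_abs]
    ring
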